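/- Let 0 ≤ R₀ < R₁ and let F : ℂ → ℂ be holomorphic and nonvanishing on the annulus A(R₀,R₁) = {z ∈ ℂ : R₀ < |z| < R₁}. Then there exist an integer m ∈ ℤ and a function H : ℂ → ℂ holomorphic on A(R₀,R₁) such that F(z) = zᵐ · exp(H(z)) for all z ∈ A(R₀,R₁). -/

import Mathlib

open Complex

open Set intervalIntegral

lemma strip_diff (T : Set ℝ) (hT : OrdConnected T) (x₀ : ℝ)
    (h : ℂ → ℂ) (hh : ∀ w : ℂ, w.re ∈ T → DifferentiableAt ℂ h w)
    (w w' : ℂ) (hw : w.re ∈ T) (hw' : w'.re ∈ T) (hx₀ : x₀ ∈ T) :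
    ((∫ x in x₀..w'.re, h x) + I * ∫ y in (0:ℝ)..w'.im, h (w'.re + y*I))
      - ((∫ x in x₀..w.re, h x) + I * ∫ y in (0:ℝ)..w.im, h (w.re + y*I))
    = (∫ x in w.re..w'.re, h (x + w.im*I)) + I * ∫ y in w.im..w'.im, h (w'.re + y*I) := by
  have hScont : ∀ u : ℂ, u.re ∈ T → ContinuousAt h u := fun u hu => (hh u hu).continuousAt
  have hint : ∀ (a b : ℝ) (c : ℝ), a ∈ T → b ∈ T →
      IntervalIntegrable (fun x : ℝ => h (x + c*I)) MeasureTheory.volume a b := by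
    intro a b c ha hb
    apply ContinuousOn.intervalIntegrable
    intro x hx
    have hxT : x ∈ T := hT.uIcc_subset ha hb hx
    have hg : ContinuousAt (fun x : ℝ => (x:ℂ) + c*I) x := by fun_prop
    exact (ContinuousAt.comp (f := fun x : ℝ => (x:ℂ) + c*I) (hScont _ (by simp [hxT])) hg).continuousWithinAt
  have vint : ∀ (a b : ℝ) (c : ℝ), c ∈ T →
      IntervalIntegrable (fun y : ℝ => h (c + y*I)) MeasureTheory.volume a b := by
    intro a b c hc
    apply ContinuousOn.intervalIntegrable
    intro y _
    have hg : ContinuousAt (fun y : ℝ => (c:ℂ) + y*I) y := by fun_prop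
    exact (ContinuousAt.comp (f := fun y : ℝ => (c:ℂ) + y*I) (hScont _ (by simp [hc])) hg).continuousWithinAt
  have rect := Complex.integral_boundary_rect_eq_zero_of_differentiableOn h
      (w.re : ℂ) (w'.re + w.im * I) ?diff
  case diff =>
    intro u hu
    rw [Complex.mem_reProdIm] at hu
    have : u.re ∈ T := by
      apply hT.uIcc_subset hw hw'
      simpa using hu.1
    exact (hh u this).differentiableWithinAt
  simp only [Complex.add_re, Complex.add_im, Complex.ofReal_re, Complex.ofReal_im,
    Complex.mul_re, Complex.mul_im, Complex.I_re, Complex.I_im, Complex.ofReal_zero,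
    mul_zero, mul_one, zero_mul, zero_sub, sub_zero, add_zero, zero_add, neg_zero,
    smul_eq_mul] at rect
  -- rect : (∫ x in w.re..w'.re, h x) - (∫ x in w.re..w'.re, h (x + w.im*I))
  --        + I*(∫ y in 0..w.im, h (w'.re + y*I)) - I*(∫ y in 0..w.im, h (w.re+y*I)) = 0
  have h1 : (∫ x in x₀..w'.re, h (x : ℂ)) - (∫ x in x₀..w.re, h (x : ℂ))
      = ∫ x in w.re..w'.re, h (x : ℂ) := by
    have e1 := intervalIntegral.integral_add_adjacent_intervals
      (a := x₀) (b := w.re) (c := w'.re) (f := fun x : ℝ => h (x : ℂ))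
      (by simpa using hint x₀ w.re 0 hx₀ hw) (by simpa using hint w.re w'.re 0 hw hw')
    linear_combination -e1
  have h2 : (∫ y in (0:ℝ)..w'.im, h (w'.re + y*I))
      = (∫ y in (0:ℝ)..w.im, h (w'.re + y*I)) + ∫ y in w.im..w'.im, h (w'.re + y*I) :=
    (intervalIntegral.integral_add_adjacent_intervals
      (vint 0 w.im w'.re hw') (vint w.im w'.im w'.re hw')).symm
  have hrect : (∫ x in w.re..w'.re, h (x:ℂ)) - (∫ x in w.re..w'.re, h (x + w.im*I))
      + I*(∫ y in (0:ℝ)..w.im, h (w'.re + y*I)) - I*(∫ y in (0:ℝ)..w.im, h (w.re+y*I)) = 0 := by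
    convert rect using 3 <;> norm_num
  linear_combination h1 + I * h2 + hrect

lemma strip_primitive (T : Set ℝ) (hT : OrdConnected T) (hTo : IsOpen T) (x₀ : ℝ) (hx₀ : x₀ ∈ T)
    (h : ℂ → ℂ) (hh : ∀ w : ℂ, w.re ∈ T → DifferentiableAt ℂ h w) :
    ∃ g : ℂ → ℂ, ∀ w : ℂ, w.re ∈ T → HasDerivAt g (h w) w := by
  set g : ℂ → ℂ := fun w =>
    (∫ x in x₀..w.re, h x) + I * ∫ y in (0:ℝ)..w.im, h (w.re + y*I) with hg
  refine ⟨g, fun w hw => ?_⟩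
  rw [hasDerivAt_iff_isLittleO, Asymptotics.isLittleO_iff]
  intro ε hε
  -- choose δ so that the ball of radius δ is good
  have hcont : ContinuousAt h w := (hh w hw).continuousAt
  obtain ⟨δ₁, hδ₁, hδ₁'⟩ := Metric.continuousAt_iff.mp hcont (ε/2) (by linarith)
  obtain ⟨δ₂, hδ₂, hδ₂'⟩ := Metric.isOpen_iff.mp hTo w.re hw
  set δ := min δ₁ δ₂ with hδdef
  have hδ : 0 < δ := lt_min hδ₁ hδ₂
  have key : ∀ u : ℂ, dist u w < δ → (u.re ∈ T ∧ dist (h u) (h w) < ε/2) := by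
    intro u hu
    have hre : dist u.re w.re < δ := by
      calc dist u.re w.re = |u.re - w.re| := Real.dist_eq _ _
        _ = |(u - w).re| := by simp [Complex.sub_re]
        _ ≤ ‖u - w‖ := Complex.abs_re_le_norm _
        _ < δ := by rw [← dist_eq_norm]; exact hu
    exact ⟨hδ₂' (lt_of_lt_of_le hre (min_le_right _ _)),
      hδ₁' (lt_of_lt_of_le hu (min_le_left _ _))⟩
  filter_upwards [Metric.ball_mem_nhds w (half_pos hδ)] with w' hw'
  have hww' : dist w' w < δ/2 := hw'
  have hw'T : w'.re ∈ T := (key w' (lt_trans hww' (by linarith))).1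
  have hdiff := strip_diff T hT x₀ h hh w w' hw hw'T hx₀
  -- bound points on the horizontal segment
  have hb1 : ∀ x ∈ Set.uIoc w.re w'.re, ‖h (x + w.im*I) - h w‖ ≤ ε/2 := by
    intro x hx
    have hxd : dist (↑x + ↑w.im*I : ℂ) w < δ := by
      have : |x - w.re| ≤ |w'.re - w.re| := by
        rcases Set.mem_uIoc.mp hx with ⟨h1,h2⟩|⟨h1,h2⟩ <;>
          rw [abs_sub_le_iff] <;> constructor <;>
          nlinarith [abs_nonneg (w'.re - w.re), le_abs_self (w'.re-w.re), neg_abs_le (w'.re-w.re)]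
      have h2 : |w'.re - w.re| ≤ ‖w' - w‖ := by
        simpa [Complex.sub_re] using Complex.abs_re_le_norm (w' - w)
      have : dist (↑x + ↑w.im*I : ℂ) w = |x - w.re| := by
        rw [Complex.dist_eq]
        have : (↑x + ↑w.im*I : ℂ) - w = ((x - w.re : ℝ) : ℂ) := by
          apply Complex.ext <;> simp [Complex.sub_re, Complex.sub_im]
        rw [this, Complex.norm_real, Real.norm_eq_abs]
      rw [this]
      calc |x - w.re| ≤ |w'.re - w.re| := by assumption
        _ ≤ ‖w' - w‖ := h2
        _ = dist w' w := (Complex.dist_eq _ _).symm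
        _ < δ := lt_trans hww' (by linarith)
    rw [← dist_eq_norm]; exact le_of_lt ((key _ hxd).2)
  have hb2 : ∀ y ∈ Set.uIoc w.im w'.im, ‖h (w'.re + y*I) - h w‖ ≤ ε/2 := by
    intro y hy
    have hyd : dist (↑w'.re + ↑y*I : ℂ) w < δ := by
      have him : |y - w.im| ≤ |w'.im - w.im| := by
        rcases Set.mem_uIoc.mp hy with ⟨h1,h2⟩|⟨h1,h2⟩ <;>
          rw [abs_sub_le_iff] <;> constructor <;> nlinarith [le_abs_self (w'.im-w.im), neg_abs_le (w'.im-w.im)]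
      have h2 : |w'.im - w.im| ≤ ‖w' - w‖ := by
        simpa [Complex.sub_im] using Complex.abs_im_le_norm (w' - w)
      have h3 : |w'.re - w.re| ≤ ‖w' - w‖ := by
        simpa [Complex.sub_re] using Complex.abs_re_le_norm (w' - w)
      have : (↑w'.re + ↑y*I : ℂ) - w = ((w'.re - w.re : ℝ) : ℂ) + ((y - w.im : ℝ) : ℂ)*I := by
        apply Complex.ext <;> simp [Complex.sub_re, Complex.sub_im]
      rw [Complex.dist_eq, this]
      calc ‖((w'.re - w.re : ℝ) : ℂ) + ((y - w.im : ℝ) : ℂ)*I‖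
          ≤ ‖((w'.re - w.re : ℝ) : ℂ)‖ + ‖((y - w.im : ℝ) : ℂ)*I‖ := norm_add_le _ _
        _ = |w'.re - w.re| + |y - w.im| := by
            rw [norm_mul, Complex.norm_I, mul_one, Complex.norm_real, Complex.norm_real, Real.norm_eq_abs, Real.norm_eq_abs]
        _ ≤ ‖w' - w‖ + ‖w' - w‖ := by
            have := le_trans him h2; linarith
        _ = 2 * dist w' w := by rw [Complex.dist_eq]; ring
        _ < δ := by linarith
    rw [← dist_eq_norm]; exact le_of_lt ((key _ hyd).2)
  -- integrability of the pieces
  have hScont : ∀ u : ℂ, u.re ∈ T → ContinuousAt h u := fun u hu => (hh u hu).continuousAt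
  have hint : IntervalIntegrable (fun x : ℝ => h (x + w.im*I)) MeasureTheory.volume w.re w'.re := by
    apply ContinuousOn.intervalIntegrable
    intro x hx
    have hxT : x ∈ T := hT.uIcc_subset hw hw'T hx
    have hgc : ContinuousAt (fun x : ℝ => (x:ℂ) + w.im*I) x := by fun_prop
    exact (ContinuousAt.comp (f := fun x : ℝ => (x:ℂ) + w.im*I) (hScont _ (by simp [hxT])) hgc).continuousWithinAt
  have vint : IntervalIntegrable (fun y : ℝ => h (w'.re + y*I)) MeasureTheory.volume w.im w'.im := by
    apply ContinuousOn.intervalIntegrable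
    intro y _
    have hgc : ContinuousAt (fun y : ℝ => (w'.re:ℂ) + y*I) y := by fun_prop
    exact (ContinuousAt.comp (f := fun y : ℝ => (w'.re:ℂ) + y*I) (hScont _ (by simp [hw'T])) hgc).continuousWithinAt
  -- main computation
  have hsplit : g w' - g w - (w' - w) • h w
      = (∫ x in w.re..w'.re, (h (x + w.im*I) - h w))
        + I * ∫ y in w.im..w'.im, (h (w'.re + y*I) - h w) := by
    rw [intervalIntegral.integral_sub hint intervalIntegrable_const,
        intervalIntegral.integral_sub vint intervalIntegrable_const]
    simp only [intervalIntegral.integral_const, Complex.real_smul]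
    have hwd : (w' - w : ℂ) = ((w'.re - w.re : ℝ) : ℂ) + ((w'.im - w.im : ℝ) : ℂ) * I := by
      apply Complex.ext <;> simp [Complex.sub_re, Complex.sub_im]
    rw [hdiff, smul_eq_mul, hwd]
    push_cast
    ring
  rw [hsplit]
  have e1 : ‖∫ x in w.re..w'.re, (h (x + w.im*I) - h w)‖ ≤ (ε/2) * |w'.re - w.re| :=
    intervalIntegral.norm_integral_le_of_norm_le_const hb1
  have e2 : ‖∫ y in w.im..w'.im, (h (w'.re + y*I) - h w)‖ ≤ (ε/2) * |w'.im - w.im| :=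
    intervalIntegral.norm_integral_le_of_norm_le_const hb2
  have h3 : |w'.re - w.re| ≤ ‖w' - w‖ := by
    simpa [Complex.sub_re] using Complex.abs_re_le_norm (w' - w)
  have h4 : |w'.im - w.im| ≤ ‖w' - w‖ := by
    simpa [Complex.sub_im] using Complex.abs_im_le_norm (w' - w)
  calc ‖(∫ x in w.re..w'.re, (h (x + w.im*I) - h w))
        + I * ∫ y in w.im..w'.im, (h (w'.re + y*I) - h w)‖
      ≤ ‖∫ x in w.re..w'.re, (h (x + w.im*I) - h w)‖
        + ‖I * ∫ y in w.im..w'.im, (h (w'.re + y*I) - h w)‖ := norm_add_le _ _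
    _ ≤ (ε/2) * |w'.re - w.re| + (ε/2) * |w'.im - w.im| := by
        rw [norm_mul, Complex.norm_I, one_mul]; exact add_le_add e1 e2
    _ ≤ (ε/2) * ‖w' - w‖ + (ε/2) * ‖w' - w‖ := by
        have := half_pos hε
        exact add_le_add (by nlinarith) (by nlinarith)
    _ = ε * ‖w' - w‖ := by ring

lemma strip_const (T : Set ℝ) (hT : OrdConnected T) (hTo : IsOpen T) (k : ℂ → ℂ)
    (hk : ∀ w : ℂ, w.re ∈ T → HasDerivAt k 0 w)
    (w w' : ℂ) (hw : w.re ∈ T) (hw' : w'.re ∈ T) : k w = k w' := by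
  set S : Set ℂ := Complex.re ⁻¹' T with hS
  have hSopen : IsOpen S := hTo.preimage Complex.continuous_re
  have hSconv : Convex ℝ S := by
    have : Convex ℝ T := hT.convex
    simpa [Complex.reLm_coe] using this.linear_preimage Complex.reLm
  have hmem : ∀ u : ℂ, u ∈ S ↔ u.re ∈ T := fun u => Iff.rfl
  refine hSconv.is_const_of_fderivWithin_eq_zero (𝕜 := ℂ) ?_ ?_ hw hw'
  · exact fun u hu => ((hk u hu).differentiableAt).differentiableWithinAt
  · intro u hu
    rw [fderivWithin_of_isOpen hSopen hu]
    have := ((hk u hu).hasFDerivAt).fderiv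
    rw [this]
    ext1
    simp


set_option maxHeartbeats 1000000 in
open Real in
/-- On an annulus, a nonvanishing holomorphic function can be written as
`z ^ m * exp (H z)` for some integer `m` and holomorphic `H`. -/
theorem stmt_1 (R₀ R₁ : ℝ) (hR₀ : 0 ≤ R₀) (hR : R₀ < R₁) (F : ℂ → ℂ)
    (A : Set ℂ) (hA : A = {z : ℂ | R₀ < ‖z‖ ∧ ‖z‖ < R₁})
    (hF : DifferentiableOn ℂ F A) (hF0 : ∀ z ∈ A, F z ≠ 0) :
    ∃ (m : ℤ) (H : ℂ → ℂ), DifferentiableOn ℂ H A ∧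
      ∀ z ∈ A, F z = z ^ m * Complex.exp (H z) := by
  have hAopen : IsOpen A := by
    have : A = (fun z : ℂ => ‖z‖) ⁻¹' (Set.Ioo R₀ R₁) := by rw [hA]; ext z; simp [Set.mem_Ioo]
    rw [this]; exact isOpen_Ioo.preimage continuous_norm
  set T : Set ℝ := Real.exp ⁻¹' Set.Ioo R₀ R₁ with hTdef
  have hT : Set.OrdConnected T := by
    constructor
    intro x hx y hy z hz
    simp only [hTdef, Set.mem_preimage, Set.mem_Ioo] at *
    exact ⟨lt_of_lt_of_le hx.1 (Real.exp_le_exp.2 hz.1),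
           lt_of_le_of_lt (Real.exp_le_exp.2 hz.2) hy.2⟩
  have hTo : IsOpen T := isOpen_Ioo.preimage Real.continuous_exp
  have hmem : ∀ w : ℂ, w.re ∈ T ↔ Complex.exp w ∈ A := by
    intro w
    rw [hA]
    simp [hTdef, Complex.norm_exp]
  set x₀ : ℝ := Real.log ((R₀+R₁)/2) with hx₀def
  have hmid : (0:ℝ) < (R₀+R₁)/2 := by linarith
  have hx₀ : x₀ ∈ T := by
    simp only [hTdef, Set.mem_preimage, Set.mem_Ioo, hx₀def, Real.exp_log hmid]
    constructor <;> linarith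
  -- the logarithmic derivative of F ∘ exp
  have hFC : ∀ z ∈ A, DifferentiableAt ℂ F z := fun z hz =>
    hF.differentiableAt (hAopen.mem_nhds hz)
  have hFd : ∀ z ∈ A, DifferentiableAt ℂ (deriv F) z := fun z hz =>
    (((hF.analyticOnNhd hAopen).deriv_of_isOpen hAopen) z hz).differentiableAt
  set h : ℂ → ℂ := fun w => deriv F (Complex.exp w) * Complex.exp w / F (Complex.exp w) with hhdef
  have hh : ∀ w : ℂ, w.re ∈ T → DifferentiableAt ℂ h w := by
    intro w hw
    have hwA : Complex.exp w ∈ A := (hmem w).1 hw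
    have h1 : DifferentiableAt ℂ (fun w => deriv F (Complex.exp w)) w :=
      (hFd _ hwA).comp w (Complex.differentiable_exp).differentiableAt
    have h2 : DifferentiableAt ℂ (fun w => F (Complex.exp w)) w :=
      (hFC _ hwA).comp w (Complex.differentiable_exp).differentiableAt
    exact (h1.mul (Complex.differentiable_exp).differentiableAt).div h2 (hF0 _ hwA)
  obtain ⟨g₀, hg₀⟩ := strip_primitive T hT hTo x₀ hx₀ h hh
  -- F ∘ exp has derivative h * (F ∘ exp)
  have hGd : ∀ w : ℂ, w.re ∈ T →
      HasDerivAt (fun w => F (Complex.exp w)) (h w * F (Complex.exp w)) w := by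
    intro w hw
    have hwA : Complex.exp w ∈ A := (hmem w).1 hw
    have := ((hFC _ hwA).hasDerivAt).comp w (Complex.hasDerivAt_exp w)
    refine this.congr_deriv ?_
    rw [hhdef]
    field_simp [hF0 _ hwA]
  -- k := (F ∘ exp) * exp(-g₀) has zero derivative on the strip
  set k : ℂ → ℂ := fun w => F (Complex.exp w) * Complex.exp (-(g₀ w)) with hkdef
  have hkd : ∀ w : ℂ, w.re ∈ T → HasDerivAt k 0 w := by
    intro w hw
    have h1 := hGd w hw
    have h2 : HasDerivAt (fun w => Complex.exp (-(g₀ w)))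
        (Complex.exp (-(g₀ w)) * (-(h w))) w := by
      have := ((hg₀ w hw).neg).cexp
      simpa [mul_comm] using this
    have := h1.mul h2
    refine this.congr_deriv ?_
    ring
  have hknz : ∀ w : ℂ, w.re ∈ T → k w ≠ 0 := by
    intro w hw
    exact mul_ne_zero (hF0 _ ((hmem w).1 hw)) (Complex.exp_ne_zero _)
  set w₀ : ℂ := (x₀ : ℂ) with hw₀def
  have hw₀T : w₀.re ∈ T := by simpa [hw₀def] using hx₀
  set c : ℂ := k w₀ with hcdef
  have hc : c ≠ 0 := hknz w₀ hw₀T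
  set g : ℂ → ℂ := fun w => g₀ w + Complex.log c with hgdef
  have hgd : ∀ w : ℂ, w.re ∈ T → HasDerivAt g (h w) w := by
    intro w hw
    exact (hg₀ w hw).add_const (Complex.log c)
  have hexpg : ∀ w : ℂ, w.re ∈ T → Complex.exp (g w) = F (Complex.exp w) := by
    intro w hw
    have hkw : k w = c := strip_const T hT hTo k hkd w w₀ hw hw₀T
    have hkw' : F (Complex.exp w) * Complex.exp (-(g₀ w)) = c := hkw
    have : F (Complex.exp w) = c * Complex.exp (g₀ w) := by
      rw [← hkw', mul_assoc, ← Complex.exp_add]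
      simp
    rw [hgdef, Complex.exp_add, Complex.exp_log hc, this]
    ring
  -- periodicity
  set P : ℂ → ℂ := fun w => g (w + 2*π*I) - g w with hPdef
  have hshiftT : ∀ w : ℂ, w.re ∈ T → (w + 2*π*I).re ∈ T := by
    intro w hw
    simpa using hw
  have hPd : ∀ w : ℂ, w.re ∈ T → HasDerivAt P 0 w := by
    intro w hw
    have h1 : HasDerivAt (fun w => g (w + 2*π*I)) (h (w + 2*π*I)) w := by
      have := (hgd (w + 2*π*I) (hshiftT w hw)).comp w
        ((hasDerivAt_id w).add_const (2*π*I))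
      simp only [mul_one] at this; exact this
    have hper : h (w + 2*π*I) = h w := by
      rw [hhdef]
      simp [Complex.exp_periodic w]
    rw [hper] at h1
    have := h1.sub (hgd w hw)
    simp only [sub_self] at this; exact this
  obtain ⟨m, hm⟩ : ∃ m : ℤ, P w₀ = m * (2*π*I) := by
    have : Complex.exp (P w₀) = 1 := by
      rw [hPdef]
      simp only
      rw [Complex.exp_sub, hexpg _ (hshiftT w₀ hw₀T), hexpg _ hw₀T,
        Complex.exp_periodic w₀]
      exact div_self (hF0 _ ((hmem w₀).1 hw₀T))
    obtain ⟨n, hn⟩ := Complex.exp_eq_one_iff.mp this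
    exact ⟨n, hn⟩
  have hPconst : ∀ w : ℂ, w.re ∈ T → P w = m * (2*π*I) := by
    intro w hw
    rw [← hm]
    exact strip_const T hT hTo P hPd w w₀ hw hw₀T
  have hPeq : ∀ w : ℂ, w.re ∈ T → g (w + 2*π*I) = g w + m * (2*π*I) := by
    intro w hw
    have h2 : g (w + 2*π*I) - g w = m * (2*π*I) := hPconst w hw
    linear_combination h2
  -- shift identity for all integers
  have hshiftTk : ∀ (j : ℤ) (w : ℂ), w.re ∈ T → (w + j*(2*π*I)).re ∈ T := by
    intro j w hw
    simpa using hw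
  have hshift : ∀ (j : ℤ) (w : ℂ), w.re ∈ T →
      g (w + j*(2*π*I)) = g w + (j*m) * (2*π*I) := by
    intro j
    induction j using Int.induction_on with
    | zero => intro w hw; simp
    | succ i ih =>
      intro w hw
      have h1 : (w + (i:ℤ)*(2*π*I)).re ∈ T := hshiftTk i w hw
      have h2 := hPeq _ h1
      have h3 := ih w hw
      push_cast at h2 h3 ⊢
      have harg : w + ((i:ℂ)+1)*(2*π*I) = w + (i:ℂ)*(2*π*I) + 2*π*I := by ring
      rw [harg]
      linear_combination h2 + h3
    | pred i ih =>
      intro w hw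
      have h1 : (w + ((-(i:ℤ)-1 : ℤ) : ℂ)*(2*π*I)).re ∈ T := hshiftTk (-(i:ℤ)-1) w hw
      have h2 := hPeq _ h1
      have h3 := ih w hw
      push_cast at h2 h3 ⊢
      have harg : w + (-(i:ℂ)-1)*(2*π*I) + 2*π*I = w + -(i:ℂ)*(2*π*I) := by ring
      rw [harg] at h2
      linear_combination h3 - h2
  -- the function H
  set H : ℂ → ℂ := fun z => g (Complex.log z) - m * Complex.log z with hHdef
  have hAne : ∀ z ∈ A, z ≠ 0 := by
    intro z hz hz0
    rw [hA] at hz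
    simp [hz0] at hz
    linarith [hz.1]
  have hlogS : ∀ z ∈ A, (Complex.log z).re ∈ T := by
    intro z hz
    rw [hmem, Complex.exp_log (hAne z hz)]
    exact hz
  refine ⟨m, H, ?_, ?_⟩
  · -- differentiability
    intro z₀ hz₀
    suffices hd : DifferentiableAt ℂ H z₀ from hd.differentiableWithinAt
    have hz₀ne : z₀ ≠ 0 := hAne z₀ hz₀
    set w₁ : ℂ := Complex.log z₀ with hw₁def
    have hw₁ : Complex.exp w₁ = z₀ := Complex.exp_log hz₀ne
    have hw₁T : w₁.re ∈ T := hlogS z₀ hz₀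
    have hsd : HasStrictDerivAt Complex.exp (Complex.exp w₁) w₁ :=
      Complex.hasStrictDerivAt_exp w₁
    have hne : Complex.exp w₁ ≠ 0 := Complex.exp_ne_zero _
    set σ : ℂ → ℂ := hsd.localInverse Complex.exp (Complex.exp w₁) w₁ hne with hσdef
    have hσd : DifferentiableAt ℂ σ z₀ := by
      rw [← hw₁]
      exact HasStrictFDerivAt.differentiableAt (hsd.to_localInverse (hf' := hne))
    have hσright : ∀ᶠ z in nhds z₀, Complex.exp (σ z) = z := by
      rw [← hw₁]
      exact (hsd.hasStrictFDerivAt_equiv hne).eventually_right_inverse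
    have hσz₀ : σ z₀ = w₁ := by
      rw [← hw₁]
      exact (hsd.hasStrictFDerivAt_equiv hne).localInverse_apply_image
    have hσT : ∀ᶠ z in nhds z₀, (σ z).re ∈ T := by
      have hcont : ContinuousAt σ z₀ := hσd.continuousAt
      have hopen : IsOpen (Complex.re ⁻¹' T) := hTo.preimage Complex.continuous_re
      have hnb : Complex.re ⁻¹' T ∈ nhds (σ z₀) := by
        rw [hσz₀]; exact hopen.mem_nhds hw₁T
      exact hcont hnb
    have hAev : ∀ᶠ z in nhds z₀, z ∈ A := hAopen.mem_nhds hz₀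
    have heq : H =ᶠ[nhds z₀] fun z => g (σ z) - m * σ z := by
      filter_upwards [hσright, hσT, hAev] with z h1 h2 h3
      have hzne : z ≠ 0 := hAne z h3
      have hlog : Complex.exp (Complex.log z) = z := Complex.exp_log hzne
      have : Complex.exp (σ z) = Complex.exp (Complex.log z) := by rw [h1, hlog]
      obtain ⟨j, hj⟩ := Complex.exp_eq_exp_iff_exists_int.mp this
      have hgj := hshift j (Complex.log z) (hlogS z h3)
      rw [hHdef]
      simp only
      rw [hj, hgj]
      ring
    rw [heq.differentiableAt_iff]
    have hgd' : DifferentiableAt ℂ g (σ z₀) := by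
      rw [hσz₀]
      exact (hgd w₁ hw₁T).differentiableAt
    exact (hgd'.comp z₀ hσd).sub (hσd.const_mul _)
  · -- the factorization
    intro z hz
    have hzne : z ≠ 0 := hAne z hz
    have hlog : Complex.exp (Complex.log z) = z := Complex.exp_log hzne
    have h1 : Complex.exp (g (Complex.log z)) = F z := by
      rw [hexpg _ (hlogS z hz), hlog]
    have h2 : Complex.exp ((m : ℂ) * Complex.log z) = z ^ m := by
      rw [Complex.exp_int_mul, hlog]
    calc F z = Complex.exp (g (Complex.log z)) := h1.symm
      _ = Complex.exp ((m:ℂ) * Complex.log z) * Complex.exp (H z) := by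
          rw [← Complex.exp_add, hHdef]; ring_nf
      _ = z ^ m * Complex.exp (H z) := by rw [h2]
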